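/- On a finite set Ω, among all probability mass functions r with full support satisfying a family of linear marginal constraints r_{X_c} = p_{X_c} for c ∈ C (where p is a fixed pmf on Ω = V^I with full support), any pmf of the form q(x) = ∏_{c ∈ C} φ_c(x_c) (with φ_c > 0) satisfying the constraints maximizes Shannon entropy H(r) = −∑_x r(x) log r(x) among all such r. That is, if q satisfies the constraints and factors as a positive product over blocks, then H(r) ≤ H(q) for every pmf r satisfying the same marginal constraints. -/

import Mathlib

lemma marg_exp {I V : Type*} [Fintype I] [DecidableEq I] [Fintype V] [DecidableEq V]
    (c : Finset I) (g r : (I → V) → ℝ)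
    (hg : ∀ x y, (∀ i ∈ c, x i = y i) → g x = g y)
    (x0 : I → V) :
    ∑ x, g x * r x = ∑ u : ({i // i ∈ c} → V),
      g (fun i => if h : i ∈ c then u ⟨i, h⟩ else x0 i) *
        ∑ y ∈ Finset.univ.filter
            (fun y => ∀ i ∈ c, y i = (fun i => if h : i ∈ c then u ⟨i, h⟩ else x0 i) i), r y := by
  rw [← Finset.sum_fiberwise Finset.univ (fun x (i : {i // i ∈ c}) => x i.1)
      (fun x => g x * r x)]
  refine Finset.sum_congr rfl fun u _ => ?_
  set e : I → V := fun i => if h : i ∈ c then u ⟨i, h⟩ else x0 i with he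
  have hfil : Finset.univ.filter (fun x : I → V => (fun i : {i // i ∈ c} => x i.1) = u)
      = Finset.univ.filter (fun y => ∀ i ∈ c, y i = e i) := by
    ext x
    simp only [Finset.mem_filter, Finset.mem_univ, true_and, funext_iff]
    constructor
    · rintro h i hi; simp [he, hi, h ⟨i, hi⟩]
    · rintro h ⟨i, hi⟩; simpa [he, hi] using h i hi
  rw [hfil, Finset.mul_sum]
  refine Finset.sum_congr rfl fun x hx => ?_
  simp only [Finset.mem_filter] at hx
  rw [hg x e hx.2]

theorem stmt_5 {I V : Type*} [Fintype I] [DecidableEq I] [Fintype V] [DecidableEq V]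
    (C : Finset (Finset I))
    (p : (I → V) → ℝ) (hp0 : ∀ x, 0 < p x) (hp1 : ∑ x, p x = 1)
    (q : (I → V) → ℝ) (hq0 : ∀ x, 0 ≤ q x) (hq1 : ∑ x, q x = 1)
    (φ : Finset I → (I → V) → ℝ)
    (hφpos : ∀ c ∈ C, ∀ x, 0 < φ c x)
    (hφloc : ∀ c ∈ C, ∀ x y : I → V, (∀ i ∈ c, x i = y i) → φ c x = φ c y)
    (hfact : ∀ x, q x = ∏ c ∈ C, φ c x)
    (hqmarg : ∀ c ∈ C, ∀ x : I → V,
      (∑ y ∈ Finset.univ.filter (fun y => ∀ i ∈ c, y i = x i), q y) =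
        ∑ y ∈ Finset.univ.filter (fun y => ∀ i ∈ c, y i = x i), p y)
    (r : (I → V) → ℝ) (hr0 : ∀ x, 0 < r x) (hr1 : ∑ x, r x = 1)
    (hrmarg : ∀ c ∈ C, ∀ x : I → V,
      (∑ y ∈ Finset.univ.filter (fun y => ∀ i ∈ c, y i = x i), r y) =
        ∑ y ∈ Finset.univ.filter (fun y => ∀ i ∈ c, y i = x i), p y) :
    (-∑ x, r x * Real.log (r x)) ≤ -∑ x, q x * Real.log (q x) := by
  have hqpos : ∀ x, 0 < q x := fun x =>
    (hfact x) ▸ Finset.prod_pos (fun c hc => hφpos c hc x)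
  have hne : Nonempty (I → V) := by
    by_contra h
    rw [not_nonempty_iff] at h
    rw [Finset.univ_eq_empty, Finset.sum_empty] at hr1
    norm_num at hr1
  obtain ⟨x0⟩ := hne
  have hlog : ∀ x, Real.log (q x) = ∑ c ∈ C, Real.log (φ c x) := fun x => by
    rw [hfact x, Real.log_prod (fun c hc => (hφpos c hc x).ne')]
  have hswap : ∀ s : (I → V) → ℝ,
      ∑ x, s x * Real.log (q x) = ∑ c ∈ C, ∑ x, Real.log (φ c x) * s x := by
    intro s
    simp_rw [hlog, Finset.mul_sum]
    rw [Finset.sum_comm]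
    simp_rw [mul_comm]
  have hkey : ∑ x, r x * Real.log (q x) = ∑ x, q x * Real.log (q x) := by
    rw [hswap r, hswap q]
    refine Finset.sum_congr rfl fun c hc => ?_
    rw [marg_exp c _ r (fun x y h => by rw [hφloc c hc x y h]) x0,
        marg_exp c _ q (fun x y h => by rw [hφloc c hc x y h]) x0]
    refine Finset.sum_congr rfl fun u _ => ?_
    rw [hrmarg c hc, hqmarg c hc]
  have hgibbs : ∀ x : I → V,
      r x * Real.log (q x) - r x * Real.log (r x) ≤ q x - r x := by
    intro x
    have h1 := Real.log_le_sub_one_of_pos (div_pos (hqpos x) (hr0 x))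
    rw [Real.log_div (hqpos x).ne' (hr0 x).ne'] at h1
    have h2 := mul_le_mul_of_nonneg_left h1 (hr0 x).le
    have h3 : r x * (q x / r x - 1) = q x - r x := by
      rw [mul_sub, mul_div_cancel₀ _ (hr0 x).ne', mul_one]
    rw [h3] at h2
    linarith [h2, mul_sub (r x) (Real.log (q x)) (Real.log (r x))]
  have hsum : ∑ x, r x * Real.log (q x) - ∑ x, r x * Real.log (r x) ≤ 0 := by
    rw [← Finset.sum_sub_distrib]
    calc ∑ x, (r x * Real.log (q x) - r x * Real.log (r x))
        ≤ ∑ x, (q x - r x) := Finset.sum_le_sum fun x _ => hgibbs x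
      _ = 0 := by rw [Finset.sum_sub_distrib, hq1, hr1]; ring
  linarith [hkey, hsum]
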